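/- Fix K ≥ 1. Let X and Z_R be random variables taking values in finite measurable spaces on a probability space (Ω, μ), let W_1, …, W_K be finite-valued random variables (the joint measurements of agent i's 1st- through K-th-order neighbors), and write W = ⟨W_1, …, W_K⟩. Let Z' and Z'' be two further finite-valued random variables (the measurements for two admissible actions of agent i). Assume I[Z' : Z_R | W] = 0, I[Z' : Z_R | ⟨X, W⟩] = 0, I[Z'' : Z_R | W] = 0, and I[Z'' : Z_R | ⟨X, W⟩] = 0. Then the localized utility Ũ^K(Z) = I[X : Z | W] satisfies Ũ^K(Z') − Ũ^K(Z'') = I[X : ⟨Z', W, Z_R⟩] − I[X : ⟨Z'', W, Z_R⟩]; i.e., the K-th-order localized utility differences coincide with the global potential differences. -/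
import Mathlib


open MeasureTheory ProbabilityTheory

/-- Shannon entropy of a random variable with values in a finite measurable space. -/
noncomputable def entropy {Ω S : Type*} [MeasurableSpace Ω] [Fintype S] [MeasurableSpace S]
    (X : Ω → S) (μ : Measure Ω) : ℝ :=
  ∑ x : S, Real.negMulLog ((μ.map X) {x}).toReal

/-- Conditional entropy H[X | Y]. -/
noncomputable def condEntropy {Ω S T : Type*} [MeasurableSpace Ω] [Fintype S] [MeasurableSpace S]
    [Fintype T] [MeasurableSpace T] (X : Ω → S) (Y : Ω → T) (μ : Measure Ω) : ℝ :=
  ∑ y : T, ((μ.map Y) {y}).toReal * entropy X (ProbabilityTheory.cond μ (Y ⁻¹' {y}))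

/-- Mutual information I[X : Y]. -/
noncomputable def mutualInfo {Ω S T : Type*} [MeasurableSpace Ω] [Fintype S] [MeasurableSpace S]
    [Fintype T] [MeasurableSpace T] (X : Ω → S) (Y : Ω → T) (μ : Measure Ω) : ℝ :=
  entropy X μ + entropy Y μ - entropy (fun ω => (X ω, Y ω)) μ

/-- Conditional mutual information I[X : Y | Z]. -/
noncomputable def condMutualInfo {Ω S T U : Type*} [MeasurableSpace Ω] [Fintype S]
    [MeasurableSpace S] [Fintype T] [MeasurableSpace T] [Fintype U] [MeasurableSpace U]
    (X : Ω → S) (Y : Ω → T) (Z : Ω → U) (μ : Measure Ω) : ℝ :=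
  ∑ z : U, ((μ.map Z) {z}).toReal * mutualInfo X Y (ProbabilityTheory.cond μ (Z ⁻¹' {z}))

section aux
variable {Ω : Type*} [MeasurableSpace Ω]
variable {S T U : Type*} [Fintype S] [MeasurableSpace S] [MeasurableSingletonClass S]
    [Fintype T] [MeasurableSpace T] [MeasurableSingletonClass T]
    [Fintype U] [MeasurableSpace U] [MeasurableSingletonClass U]

/-- Entropy is invariant under injective relabeling. -/
lemma entropy_comp_inj (μ : Measure Ω) (X : Ω → S) (hX : Measurable X)
    (f : S → T) (hf : Function.Injective f) :
    entropy (fun ω => f (X ω)) μ = entropy X μ := by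
  classical
  have hfm : Measurable fun ω => f (X ω) := (measurable_of_countable f).comp hX
  have key : ∀ x : S, (μ.map (fun ω => f (X ω))) {f x} = (μ.map X) {x} := by
    intro x
    rw [Measure.map_apply hfm (measurableSet_singleton _),
        Measure.map_apply hX (measurableSet_singleton _)]
    congr 1
    ext ω
    simp [hf.eq_iff]
  have hzero : ∀ t ∈ Finset.univ, t ∉ Finset.univ.image f →
      Real.negMulLog ((μ.map (fun ω => f (X ω))) {t}).toReal = 0 := by
    intro t _ ht
    have h0 : (μ.map (fun ω => f (X ω))) {t} = 0 := by
      rw [Measure.map_apply hfm (measurableSet_singleton _)]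
      have he : (fun ω => f (X ω)) ⁻¹' {t} = ∅ := by
        ext ω
        simp only [Set.mem_preimage, Set.mem_singleton_iff, Set.mem_empty_iff_false, iff_false]
        intro h
        exact ht (Finset.mem_image.mpr ⟨X ω, Finset.mem_univ _, h⟩)
      simp [he]
    simp [h0]
  unfold entropy
  rw [← Finset.sum_subset (Finset.subset_univ (Finset.univ.image f)) hzero,
      Finset.sum_image (fun x _ y _ h => hf h)]
  simp only [key]

/-- Chain rule for entropy: H[X, Y] = H[Y] + H[X | Y]. -/
lemma entropy_pair_eq (μ : Measure Ω) [IsProbabilityMeasure μ] (X : Ω → S) (Y : Ω → T)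
    (hX : Measurable X) (hY : Measurable Y) :
    entropy (fun ω => (X ω, Y ω)) μ = entropy Y μ + condEntropy X Y μ := by
  classical
  set j : S → T → ℝ := fun x y => (μ (X ⁻¹' {x} ∩ Y ⁻¹' {y})).toReal with hj
  set q : T → ℝ := fun y => (μ (Y ⁻¹' {y})).toReal with hqdef
  have hjm : ∀ (x : S) (y : T),
      (((μ.map (fun ω => (X ω, Y ω))) {(x, y)}).toReal) = j x y := by
    intro x y
    rw [Measure.map_apply (hX.prodMk hY) (measurableSet_singleton _)]
    have : (fun ω => (X ω, Y ω)) ⁻¹' {(x, y)} = X ⁻¹' {x} ∩ Y ⁻¹' {y} := by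
      ext ω; simp [Prod.ext_iff]
    rw [this]
  have hqm : ∀ y : T, ((μ.map Y) {y}).toReal = q y := by
    intro y
    rw [Measure.map_apply hY (measurableSet_singleton _)]
  have hsum : ∀ y, ∑ x : S, j x y = q y := by
    intro y
    have hU : Y ⁻¹' {y} = ⋃ x ∈ Finset.univ, (X ⁻¹' {x} ∩ Y ⁻¹' {y}) := by
      ext ω; simp
    have hdisj : Set.PairwiseDisjoint ↑(Finset.univ : Finset S)
        (fun x => X ⁻¹' {x} ∩ Y ⁻¹' {y}) := by
      intro a _ b _ hab
      refine Set.disjoint_left.mpr fun ω h1 h2 => hab ?_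
      have ha : X ω = a := h1.1
      have hb : X ω = b := h2.1
      rw [← ha, ← hb]
    have hme : μ (Y ⁻¹' {y}) = ∑ x : S, μ (X ⁻¹' {x} ∩ Y ⁻¹' {y}) := by
      conv_lhs => rw [hU]
      exact measure_biUnion_finset hdisj
        (fun x _ => (hX (measurableSet_singleton x)).inter (hY (measurableSet_singleton y)))
    have := congrArg ENNReal.toReal hme
    rw [ENNReal.toReal_sum (fun x _ => measure_ne_top μ _)] at this
    exact this.symm
  have main : ∀ y : T, ∑ x : S, Real.negMulLog (j x y) =
      Real.negMulLog (q y) + q y * entropy X (μ[|Y ⁻¹' {y}]) := by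
    intro y
    by_cases hq : q y = 0
    · have hμ0 : μ (Y ⁻¹' {y}) = 0 :=
        ((ENNReal.toReal_eq_zero_iff _).mp hq).resolve_right (measure_ne_top μ _)
      have hj0 : ∀ x, j x y = 0 := by
        intro x
        have h0 : μ (X ⁻¹' {x} ∩ Y ⁻¹' {y}) = 0 := measure_inter_null_of_null_right _ hμ0
        simp [hj, h0]
      simp [hj0, hq]
    · have hμ0 : μ (Y ⁻¹' {y}) ≠ 0 := by
        intro h; rw [hqdef] at hq; simp [h] at hq
      have hcond : ∀ x : S, (((μ[|Y ⁻¹' {y}]).map X) {x}).toReal = j x y / q y := by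
        intro x
        rw [Measure.map_apply hX (measurableSet_singleton _),
            cond_apply (hY (measurableSet_singleton y)),
            ENNReal.toReal_mul, ENNReal.toReal_inv, Set.inter_comm, div_eq_inv_mul]
      have hstep : ∀ x : S, Real.negMulLog (j x y) =
          q y * Real.negMulLog (j x y / q y) + (j x y / q y) * Real.negMulLog (q y) := by
        intro x
        rw [← Real.negMulLog_mul, div_mul_cancel₀ _ hq]
      rw [Finset.sum_congr rfl (fun x _ => hstep x), Finset.sum_add_distrib, ← Finset.mul_sum]
      have h2 : ∑ x : S, j x y / q y * Real.negMulLog (q y) = Real.negMulLog (q y) := by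
        rw [← Finset.sum_mul, ← Finset.sum_div, hsum y, div_self hq, one_mul]
      rw [h2]
      unfold entropy
      simp only [hcond]
      ring
  unfold entropy condEntropy
  rw [Fintype.sum_prod_type, Finset.sum_comm, ← Finset.sum_add_distrib]
  apply Finset.sum_congr rfl
  intro y _
  calc ∑ x : S, Real.negMulLog ((μ.map (fun ω => (X ω, Y ω))) {(x, y)}).toReal
      = ∑ x : S, Real.negMulLog (j x y) := by
        exact Finset.sum_congr rfl fun x _ => by rw [hjm x y]
    _ = Real.negMulLog (q y) + q y * entropy X (μ[|Y ⁻¹' {y}]) := main y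
    _ = _ := by rw [← hqm y]

/-- Conditional mutual information in terms of joint entropies. -/
lemma condMutualInfo_eq_entropy (μ : Measure Ω) [IsProbabilityMeasure μ]
    (X : Ω → S) (Y : Ω → T) (Z : Ω → U)
    (hX : Measurable X) (hY : Measurable Y) (hZ : Measurable Z) :
    condMutualInfo X Y Z μ =
      entropy (fun ω => (X ω, Z ω)) μ + entropy (fun ω => (Y ω, Z ω)) μ
        - entropy (fun ω => ((X ω, Y ω), Z ω)) μ - entropy Z μ := by
  have e1 := entropy_pair_eq μ X Z hX hZ
  have e2 := entropy_pair_eq μ Y Z hY hZ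
  have e3 := entropy_pair_eq μ (fun ω => (X ω, Y ω)) Z (hX.prodMk hY) hZ
  have hce : condMutualInfo X Y Z μ =
      condEntropy X Z μ + condEntropy Y Z μ - condEntropy (fun ω => (X ω, Y ω)) Z μ := by
    unfold condMutualInfo condEntropy mutualInfo
    rw [← Finset.sum_add_distrib, ← Finset.sum_sub_distrib]
    exact Finset.sum_congr rfl fun z _ => by ring
  rw [hce]
  linarith

/-- Key step: under the two conditional-independence hypotheses, the difference between the
global potential and the localized utility is a constant not depending on `Z`. -/
lemma key_lemma {A B C D : Type*}
    [Fintype A] [MeasurableSpace A] [MeasurableSingletonClass A]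
    [Fintype B] [MeasurableSpace B] [MeasurableSingletonClass B]
    [Fintype C] [MeasurableSpace C] [MeasurableSingletonClass C]
    [Fintype D] [MeasurableSpace D] [MeasurableSingletonClass D]
    (μ : Measure Ω) [IsProbabilityMeasure μ]
    (X : Ω → A) (Z : Ω → B) (ZR : Ω → C) (Wf : Ω → D)
    (hX : Measurable X) (hZ : Measurable Z) (hZR : Measurable ZR) (hW : Measurable Wf)
    (h1 : condMutualInfo Z ZR Wf μ = 0)
    (h2 : condMutualInfo Z ZR (fun ω => (X ω, Wf ω)) μ = 0) :
    mutualInfo X (fun ω => (Z ω, Wf ω, ZR ω)) μ - condMutualInfo X Z Wf μ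
      = entropy X μ + entropy (fun ω => (ZR ω, Wf ω)) μ
        - entropy (fun ω => (ZR ω, (X ω, Wf ω))) μ := by
  have hXW : Measurable fun ω => (X ω, Wf ω) := hX.prodMk hW
  rw [condMutualInfo_eq_entropy μ Z ZR Wf hZ hZR hW] at h1
  rw [condMutualInfo_eq_entropy μ Z ZR (fun ω => (X ω, Wf ω)) hZ hZR hXW] at h2
  rw [condMutualInfo_eq_entropy μ X Z Wf hX hZ hW]
  unfold mutualInfo
  -- relabelings
  have r1 : entropy (fun ω => (Z ω, Wf ω, ZR ω)) μ
      = entropy (fun ω => ((Z ω, ZR ω), Wf ω)) μ :=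
    entropy_comp_inj μ (fun ω => ((Z ω, ZR ω), Wf ω)) ((hZ.prodMk hZR).prodMk hW)
      (fun p => (p.1.1, (p.2, p.1.2)))
      (by rintro ⟨⟨z1, r1⟩, w1⟩ ⟨⟨z2, r2⟩, w2⟩ h; simp_all [Prod.ext_iff])
  have r2 : entropy (fun ω => (X ω, (Z ω, Wf ω, ZR ω))) μ
      = entropy (fun ω => ((Z ω, ZR ω), (X ω, Wf ω))) μ :=
    entropy_comp_inj μ (fun ω => ((Z ω, ZR ω), (X ω, Wf ω)))
      ((hZ.prodMk hZR).prodMk hXW)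
      (fun p => (p.2.1, (p.1.1, (p.2.2, p.1.2))))
      (by rintro ⟨⟨z1, r1⟩, x1, w1⟩ ⟨⟨z2, r2⟩, x2, w2⟩ h; simp_all [Prod.ext_iff])
  have r3 : entropy (fun ω => (Z ω, (X ω, Wf ω))) μ
      = entropy (fun ω => ((X ω, Z ω), Wf ω)) μ :=
    entropy_comp_inj μ (fun ω => ((X ω, Z ω), Wf ω)) ((hX.prodMk hZ).prodMk hW)
      (fun p => (p.1.2, (p.1.1, p.2)))
      (by rintro ⟨⟨x1, z1⟩, w1⟩ ⟨⟨x2, z2⟩, w2⟩ h; simp_all [Prod.ext_iff])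
  linarith

end aux

/-- Proposition 2: if agent i's measurements are conditionally independent of the agents outside
its K-th order neighborhood given the joint measurement W = ⟨W_1, …, W_K⟩ of its up-to-K-th-order
neighbors (both with and without conditioning on the target X), then the K-th-order localized
utility Ũ^K(Z) = I[X : Z | W] has differences coinciding with the global potential differences. -/
theorem Kth_order_localized_utility_is_potential_aligned
    {Ω 𝒳 𝒵R 𝒵' 𝒵'' : Type*} [MeasurableSpace Ω]
    [Fintype 𝒳] [MeasurableSpace 𝒳] [MeasurableSingletonClass 𝒳]
    [Fintype 𝒵R] [MeasurableSpace 𝒵R] [MeasurableSingletonClass 𝒵R]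
    [Fintype 𝒵'] [MeasurableSpace 𝒵'] [MeasurableSingletonClass 𝒵']
    [Fintype 𝒵''] [MeasurableSpace 𝒵''] [MeasurableSingletonClass 𝒵'']
    (K : ℕ) (hK : 1 ≤ K)
    {𝒲 : Fin K → Type*} [∀ k, Fintype (𝒲 k)] [∀ k, MeasurableSpace (𝒲 k)]
    [∀ k, MeasurableSingletonClass (𝒲 k)]
    (μ : Measure Ω) [IsProbabilityMeasure μ]
    (X : Ω → 𝒳) (ZR : Ω → 𝒵R) (W : ∀ k : Fin K, Ω → 𝒲 k) (Z' : Ω → 𝒵') (Z'' : Ω → 𝒵'')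
    (hX : Measurable X) (hZR : Measurable ZR) (hW : ∀ k, Measurable (W k))
    (hZ' : Measurable Z') (hZ'' : Measurable Z'')
    (h1 : condMutualInfo Z' ZR (fun ω (k : Fin K) => W k ω) μ = 0)
    (h2 : condMutualInfo Z' ZR (fun ω => (X ω, fun k : Fin K => W k ω)) μ = 0)
    (h3 : condMutualInfo Z'' ZR (fun ω (k : Fin K) => W k ω) μ = 0)
    (h4 : condMutualInfo Z'' ZR (fun ω => (X ω, fun k : Fin K => W k ω)) μ = 0) :
    condMutualInfo X Z' (fun ω (k : Fin K) => W k ω) μ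
        - condMutualInfo X Z'' (fun ω (k : Fin K) => W k ω) μ
      = mutualInfo X (fun ω => (Z' ω, fun k : Fin K => W k ω, ZR ω)) μ
        - mutualInfo X (fun ω => (Z'' ω, fun k : Fin K => W k ω, ZR ω)) μ := by
  have hWf : Measurable fun ω (k : Fin K) => W k ω :=
    measurable_pi_lambda _ fun k => hW k
  have k1 := key_lemma μ X Z' ZR (fun ω (k : Fin K) => W k ω) hX hZ' hZR hWf h1 h2
  have k2 := key_lemma μ X Z'' ZR (fun ω (k : Fin K) => W k ω) hX hZ'' hZR hWf h3 h4
  linarith
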